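/- Let n ≥ 2 and let c, d be invertible 2n × 2n matrices over the field F₃ with three elements such that c² = −1 (the negative of the identity matrix) and d is a reflection, i.e. d² = 1 and the kernel of d − 1 has dimension 2n − 1. Then the subgroup of GL_{2n}(F₃) generated by c and d is a 2-group. -/

import Mathlib

private lemma z3kill {R : Type*} [Ring R] [Algebra (ZMod 3) R] (k : ℤ) (x : R)
    (h : ((k : ZMod 3)) = 0) : k • x = 0 := by
  rw [← Int.cast_smul_eq_zsmul (ZMod 3), h, zero_smul]

lemma key_alg {R : Type*} [Ring R] [Algebra (ZMod 3) R] (C E : R) (a : ZMod 3)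
    (hC : C*C = -1) (hE : E*E = E) (hECE : E*(C*E) = a • E) : (C*(1+E))^8 = 1 := by
  have e2 : ∀ M : R, C*(C*M) = -M := fun M => by rw [← mul_assoc, hC, neg_one_mul]
  have e4 : ∀ M : R, E*(E*M) = E*M := fun M => by rw [← mul_assoc, hE]
  have e6 : ∀ M : R, E*(C*(E*M)) = a • (E*M) := fun M => by
    rw [show C*(E*M) = (C*E)*M by rw [mul_assoc], ← mul_assoc, hECE, smul_mul_assoc]
  rcases (show ∀ b : ZMod 3, b = 0 ∨ b = 1 ∨ b = 2 by decide) a with rfl | rfl | rfl <;>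
    [simp only [zero_smul] at hECE e6;
     simp only [one_smul] at hECE e6;
     simp only [show ∀ x : R, (2 : ZMod 3) • x = -x by
        intro x
        rw [show (2 : ZMod 3) = -1 by decide, neg_smul, one_smul]] at hECE e6] <;>
  · simp only [pow_succ, pow_zero, one_mul, mul_add, add_mul, mul_one, mul_assoc, e2, hC, e4, hE,
      e6, hECE, mul_neg, neg_mul, neg_neg, mul_zero, zero_mul, add_zero, zero_add, neg_add_rev,
      neg_zero]
    generalize E * C = u
    generalize C * E = v
    generalize C * u = w
    abel_nf
    simp (disch := decide) only [z3kill]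
    abel


lemma ece_smul {m : ℕ} (C E : Matrix (Fin m) (Fin m) (ZMod 3))
    (h1 : Module.finrank (ZMod 3) (LinearMap.range (Matrix.toLin' E)) = 1) :
    ∃ a : ZMod 3, E*(C*E) = a • E := by
  obtain ⟨v, hv0, hv⟩ := (finrank_eq_one_iff'.mp h1)
  obtain ⟨a, ha⟩ := hv ⟨Matrix.toLin' E (Matrix.toLin' C ↑v), LinearMap.mem_range_self _ _⟩
  have ha' : a • (↑v : Fin m → ZMod 3) = Matrix.toLin' E (Matrix.toLin' C ↑v) :=
    congrArg Subtype.val ha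
  refine ⟨a, Matrix.toLin'.injective ?_⟩
  apply LinearMap.ext; intro x
  rw [Matrix.toLin'_mul, Matrix.toLin'_mul, map_smul]
  obtain ⟨t, ht⟩ := hv ⟨Matrix.toLin' E x, LinearMap.mem_range_self _ _⟩
  have ht' : t • (↑v : Fin m → ZMod 3) = Matrix.toLin' E x := congrArg Subtype.val ht
  simp only [LinearMap.comp_apply, LinearMap.smul_apply]
  rw [← ht', map_smul, map_smul, ← ha', smul_comm]

section Grp

variable {G : Type*} [Group G] [HasDistribNeg G]

lemma grp_main (c d : G) (hc : c^2 = -1) (hd : d^2 = 1) (hr8 : (c*d)^8 = 1) :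
    ∀ g ∈ Subgroup.closure {c, d}, g ^ 16 = 1 := by
  set r := c * d with hrdef
  have hpar : ∀ a b : ℕ, a % 2 = b % 2 → (-1:G)^a = (-1)^b := by
    have hneg : ∀ m : ℕ, (-1:G)^m = (-1)^(m % 2) := by
      intro m
      conv_lhs => rw [← Nat.div_add_mod m 2]
      rw [pow_add, pow_mul, neg_one_sq, one_pow, one_mul]
    intro a b h; rw [hneg a, hneg b, h]
  have hdd : d * d = 1 := by rw [← pow_two]; exact hd
  have hdinv : d⁻¹ = d := inv_eq_of_mul_eq_one_right hdd
  have hcinv : c⁻¹ = -c := inv_eq_of_mul_eq_one_right (by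
    rw [mul_neg, ← pow_two, hc, neg_neg])
  have hrinv : r⁻¹ = r^7 := inv_eq_of_mul_eq_one_right (by rw [← pow_succ']; exact hr8)
  have hdr1 : ∀ y : G, d * (r * y) = (-1)^1 * (r^7 * (d * y)) := by
    intro y
    have h1 : d * r = -1 * (r^7 * d) := by
      rw [← hrinv, hrdef, mul_inv_rev, hcinv, hdinv]
      simp [mul_neg, neg_mul, mul_assoc, hdd]
    rw [← mul_assoc, h1, pow_one]; simp only [mul_assoc]
  have L1r : ∀ (a m : ℕ) (y : G), r^a * ((-1)^m * y) = (-1)^m * (r^a * y) := fun a m y => by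
    rw [← mul_assoc, ← ((Commute.neg_one_left (r^a)).pow_left m).eq, mul_assoc]
  have L1d1 : ∀ (m : ℕ) (y : G), d * ((-1)^m * y) = (-1)^m * (d * y) := fun m y => by
    rw [← mul_assoc, ← ((Commute.neg_one_left d).pow_left m).eq, mul_assoc]
  have L3 : ∀ (a b : ℕ) (y : G), r^a * (r^b * y) = r^(a+b) * y := fun a b y => by
    rw [← mul_assoc, ← pow_add]
  have L41 : ∀ (b : ℕ) (y : G), d * (d^b * y) = d^(b+1) * y := fun b y => by
    rw [← mul_assoc, show d * d^b = d^(b+1) from by rw [pow_succ']]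
  have L5 : ∀ (a b : ℕ) (y : G), (-1:G)^a * ((-1)^b * y) = (-1)^(a+b) * y := fun a b y => by
    rw [← mul_assoc, ← pow_add]
  have hswap : ∀ (j : ℕ) (y : G), d * (r^j * y) = (-1)^j * (r^(7*j) * (d * y)) := by
    intro j; induction j with
    | zero => intro y; simp
    | succ j ih =>
      intro y
      rw [pow_succ, mul_assoc, ih (r * y), hdr1 y, L1r, L5, L3,
        show 7*j+7 = 7*(j+1) by ring]
  have hswapk : ∀ (k j : ℕ) (y : G), d^k * (r^j * y) = (-1)^(j*k) * (r^(7^k*j) * (d^k * y)) := by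
    intro k; induction k with
    | zero => intro j y; simp
    | succ k ih =>
      intro j y
      rw [pow_succ', mul_assoc, ih j y, L1d1, hswap, L5, L41,
        show 7*(7^k*j) = 7^(k+1)*j by ring]
      obtain ⟨m, hm⟩ := (Odd.pow (by decide : Odd 7) : Odd (7^k))
      rw [hpar (j*k + 7^k*j) (j*(k+1)) (by
        rw [hm, show j*k + (2*m+1)*j = (j*k + j) + 2*(m*j) by ring,
          show j*(k+1) = j*k + j by ring]
        omega)]
      simp [mul_assoc, pow_succ']
  have L1dk : ∀ (a m : ℕ) (y : G), d^a * ((-1)^m * y) = (-1)^m * (d^a * y) := fun a m y => by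
    rw [← mul_assoc, ← ((Commute.neg_one_left (d^a)).pow_left m).eq, mul_assoc]
  -- multiplication of normal forms
  have hSmul : ∀ i j k i' j' k' : ℕ,
      ((-1:G)^i * (r^j * d^k)) * ((-1)^i' * (r^j' * d^k'))
        = (-1)^(i + (i' + j'*k)) * (r^(j + 7^k*j') * d^(k + k')) := by
    intro i j k i' j' k'
    simp only [mul_assoc, L1dk, L1r, hswapk, L3, L5, ← pow_add]
  -- every normal form has 16th power 1
  have h16 : ∀ i j k : ℕ, ((-1:G)^i * (r^j * d^k))^16 = 1 := by
    intro i j k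
    rw [((Commute.neg_one_left (r^j * d^k)).pow_left i).mul_pow 16,
      ← pow_mul, hpar (i*16) 0 (by omega), pow_zero, one_mul]
    rcases Nat.even_or_odd k with ⟨m, hm⟩ | ⟨m, hm⟩
    · rw [hm, show m + m = 2*m by ring, pow_mul, hd, one_pow, mul_one, ← pow_mul,
        show j*16 = 8*(2*j) by ring, pow_mul, hr8, one_pow]
    · have hw2 : (r^j * d^k)^2 = (-1)^j := by
        rw [pow_two, hm, show 2*m+1 = (2*m)+1 from rfl, pow_succ, pow_mul, hd, one_pow, one_mul]
        have := hSmul 0 j 1 0 j 1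
        simp only [pow_zero, one_mul, pow_one] at this
        rw [this, hpar (0 + (0 + j*1)) j (by omega),
          show j + 7*j = 8*j by ring, show (1+1:ℕ) = 2 by rfl, pow_mul, hr8, one_pow, hd,
          one_mul, mul_one]
      rw [show (16:ℕ) = 2*8 by rfl, pow_mul, hw2, ← pow_mul,
        hpar (j*8) 0 (by omega), pow_zero]
  -- the subgroup
  intro g hg
  have hgS : ∃ i j k : ℕ, g = (-1)^i * (r^j * d^k) := by
    have hsub : Subgroup.closure {c, d} ≤
        { carrier := {g : G | ∃ i j k : ℕ, g = (-1)^i * (r^j * d^k)}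
          one_mem' := ⟨0, 0, 0, by simp⟩
          mul_mem' := by
            rintro x y ⟨i, j, k, rfl⟩ ⟨i', j', k', rfl⟩
            exact ⟨_, _, _, hSmul i j k i' j' k'⟩
          inv_mem' := by
            rintro x ⟨i, j, k, rfl⟩
            have hx : ∀ m : ℕ, ∃ I J K : ℕ,
                ((-1:G)^i * (r^j * d^k))^m = (-1)^I * (r^J * d^K) := by
              intro m; induction m with
              | zero => exact ⟨0, 0, 0, by simp⟩
              | succ m ih =>
                obtain ⟨I, J, K, h⟩ := ih
                exact ⟨_, _, _, by rw [pow_succ, h, hSmul]⟩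
            have hinv : ((-1:G)^i * (r^j * d^k))⁻¹ = ((-1:G)^i * (r^j * d^k))^15 :=
              inv_eq_of_mul_eq_one_right (by rw [← pow_succ']; exact h16 i j k)
            obtain ⟨I, J, K, h⟩ := hx 15
            exact ⟨I, J, K, by rw [hinv, h]⟩ } := by
      rw [Subgroup.closure_le]
      rintro x (rfl | rfl)
      · exact ⟨0, 1, 1, by simp [hrdef, mul_assoc, hdd]⟩
      · exact ⟨0, 0, 1, by simp⟩
    exact hsub hg
  obtain ⟨i, j, k, rfl⟩ := hgS
  exact h16 i j k
end Grp

/-- **Example in `SL_{2n}(3).2`.**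
Let `c, d` be invertible `2n × 2n` matrices over `F₃` (`n ≥ 2`) with `c² = -1` and `d`
a reflection (i.e. `d² = 1` and `ker (d - 1)` has dimension `2n - 1`). Then the
subgroup of `GL_{2n}(F₃)` generated by `c` and `d` is a 2-group. -/
theorem statement_12 (n : ℕ) (hn : 2 ≤ n)
    (c d : GL (Fin (2 * n)) (ZMod 3))
    (hc : c ^ 2 = -1)
    (hd2 : d ^ 2 = 1)
    (hdfix : Module.finrank (ZMod 3)
        (LinearMap.ker (Matrix.toLin'
          ((d : Matrix (Fin (2 * n)) (Fin (2 * n)) (ZMod 3)) - 1))) = 2 * n - 1) :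
    IsPGroup 2 ↥(Subgroup.closure {c, d}) := by
  set M := Matrix (Fin (2 * n)) (Fin (2 * n)) (ZMod 3)
  set C : M := (c : M) with hCdef
  set D : M := (d : M) with hDdef
  set E : M := D - 1 with hEdef
  -- matrix-level relations
  have hCmat : C * C = -1 := by
    have := congrArg Units.val hc
    rw [pow_two] at this
    simpa [hCdef] using this
  have hDmat : D * D = 1 := by
    have := congrArg Units.val hd2
    rw [pow_two] at this
    simpa [hDdef] using this
  have h3 : ∀ x : M, x + x + x = 0 := fun x => by
    calc x + x + x = (1:ZMod 3)•x + (1:ZMod 3)•x + (1:ZMod 3)•x := by rw [one_smul]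
      _ = ((1+1+1 : ZMod 3))•x := by rw [add_smul, add_smul]
      _ = 0 := by rw [show (1+1+1 : ZMod 3) = 0 by decide, zero_smul]
  have hE2 : E * E = E := by
    have hring : E * E = E + ((1-D) + (1-D) + (1-D)) + (D*D - 1) := by
      rw [hEdef]; simp only [sub_mul, mul_sub, mul_one, one_mul]; abel
    rw [hring, h3 (1-D), hDmat, sub_self, add_zero, add_zero]
  -- rank of E is 1
  have hrange : Module.finrank (ZMod 3) (LinearMap.range (Matrix.toLin' E)) = 1 := by
    have hrn := LinearMap.finrank_range_add_finrank_ker (Matrix.toLin' E)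
    rw [hdfix, Module.finrank_fintype_fun_eq_card, Fintype.card_fin] at hrn
    omega
  obtain ⟨a, ha⟩ := ece_smul C E hrange
  -- the key matrix identity
  have hX8 : (C * (1 + E))^8 = 1 := key_alg C E a hCmat hE2 ha
  have hCD : C * (1 + E) = C * D := by
    congr 1
    rw [hEdef]; abel
  -- lift to GL
  have hr8 : (c * d)^8 = 1 := by
    apply Units.ext
    have : (((c * d)^8 : GL (Fin (2*n)) (ZMod 3)) : M) = (C * D)^8 := by
      simp [hCdef, hDdef]
    rw [this, ← hCD, hX8]
    rfl
  have h16 := grp_main c d hc hd2 hr8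
  intro g
  refine ⟨4, ?_⟩
  have hg16 : (g : GL (Fin (2*n)) (ZMod 3))^16 = 1 := h16 ↑g g.2
  apply Subtype.ext
  rw [SubgroupClass.coe_pow]
  simpa using hg16
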